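/- For every θ ∈ ℝ, the map s_θ is an isometry of the standard Nil metric: for all p, v, w ∈ ℝ³, Q_{s_θ(p)}(Ds_θ(p)v, Ds_θ(p)w) = Q_p(v,w), where Ds_θ(p) is the Fréchet derivative of s_θ at p and Q_p(v,w) := v¹w¹ + v²w² + (v³ − p¹v²)(w³ − p¹w²). -/

import Mathlib

noncomputable section

open Real

/-- `ζ_θ(x,y) = ½((x²−y²)cos θ − 2xy sin θ) sin θ`. -/
def zeta (θ x y : ℝ) : ℝ :=
  (1 / 2) * ((x ^ 2 - y ^ 2) * Real.cos θ - 2 * x * y * Real.sin θ) * Real.sin θ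

/-- `s_θ(x,y,z) = (R_θ(x,y), z + ζ_θ(x,y))`, with `R_θ` the rotation of ℝ² by angle θ. -/
def sMap (θ : ℝ) (p : ℝ × ℝ × ℝ) : ℝ × ℝ × ℝ :=
  (p.1 * Real.cos θ - p.2.1 * Real.sin θ,
   p.1 * Real.sin θ + p.2.1 * Real.cos θ,
   p.2.2 + zeta θ p.1 p.2.1)

/-- The standard Nil metric: at the point `p`, the bilinear form
`Q_p(v,w) = v¹w¹ + v²w² + (v³ − p¹v²)(w³ − p¹w²)`, i.e. `dl² = dx² + dy² + (dz − x dy)²`. -/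
def nilStdMetric (p v w : ℝ × ℝ × ℝ) : ℝ :=
  v.1 * w.1 + v.2.1 * w.2.1 + (v.2.2 - p.1 * v.2.1) * (w.2.2 - p.1 * w.2.1)

/-- For every `θ`, `s_θ` is an isometry of the standard Nil metric. -/
theorem sTheta_isometry (θ : ℝ) (p v w : ℝ × ℝ × ℝ) :
    nilStdMetric (sMap θ p) (fderiv ℝ (sMap θ) p v) (fderiv ℝ (sMap θ) p w)
      = nilStdMetric p v w := by
  have hX : HasFDerivAt (fun q : ℝ × ℝ × ℝ => q.1)
      (ContinuousLinearMap.fst ℝ ℝ (ℝ × ℝ)) p := hasFDerivAt_fst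
  have hY : HasFDerivAt (fun q : ℝ × ℝ × ℝ => q.2.1)
      ((ContinuousLinearMap.fst ℝ ℝ ℝ).comp (ContinuousLinearMap.snd ℝ ℝ (ℝ × ℝ))) p :=
    hasFDerivAt_fst.comp p hasFDerivAt_snd
  have hZ : HasFDerivAt (fun q : ℝ × ℝ × ℝ => q.2.2)
      ((ContinuousLinearMap.snd ℝ ℝ ℝ).comp (ContinuousLinearMap.snd ℝ ℝ (ℝ × ℝ))) p :=
    hasFDerivAt_snd.comp p hasFDerivAt_snd
  have h1 := (hX.mul_const (Real.cos θ)).sub (hY.mul_const (Real.sin θ))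
  have h2 := (hX.mul_const (Real.sin θ)).add (hY.mul_const (Real.cos θ))
  have hz := hZ.add
    ((((((hX.mul hX).sub (hY.mul hY)).mul_const (Real.cos θ)).sub
        (((hX.const_mul 2).mul hY).mul_const (Real.sin θ))).const_mul (1 / 2)).mul_const
      (Real.sin θ))
  have hs : sMap θ = fun q : ℝ × ℝ × ℝ =>
      (q.1 * Real.cos θ - q.2.1 * Real.sin θ,
       q.1 * Real.sin θ + q.2.1 * Real.cos θ,
       q.2.2 + 1 / 2 * ((q.1 * q.1 - q.2.1 * q.2.1) * Real.cos θ -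
         2 * q.1 * q.2.1 * Real.sin θ) * Real.sin θ) := by
    funext q
    simp only [sMap, zeta]
    ring_nf
  have H := HasFDerivAt.prodMk h1 (HasFDerivAt.prodMk h2 hz)
  change HasFDerivAt (fun q : ℝ × ℝ × ℝ =>
      (q.1 * Real.cos θ - q.2.1 * Real.sin θ,
       q.1 * Real.sin θ + q.2.1 * Real.cos θ,
       q.2.2 + 1 / 2 * ((q.1 * q.1 - q.2.1 * q.2.1) * Real.cos θ -
         2 * q.1 * q.2.1 * Real.sin θ) * Real.sin θ)) _ p at H
  rw [← hs] at H
  rw [H.fderiv]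
  simp only [nilStdMetric, sMap, zeta, ContinuousLinearMap.prod_apply,
    ContinuousLinearMap.add_apply, ContinuousLinearMap.sub_apply,
    ContinuousLinearMap.smul_apply, ContinuousLinearMap.comp_apply,
    ContinuousLinearMap.coe_fst', ContinuousLinearMap.coe_snd', smul_eq_mul]
  linear_combination (v.1 * w.1 + v.2.1 * w.2.1 - p.1 * v.2.2 * w.2.1 - p.1 * v.2.1 * w.2.2 +
      p.1 ^ 2 * v.2.1 * w.2.1 * (Real.sin θ ^ 2 + Real.cos θ ^ 2 + 1)) *
    (Real.sin_sq_add_cos_sq θ)
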